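/- Let G be a finite group in which any two nontrivial cyclic subgroups intersect nontrivially, i.e., for all g, h ∈ G with g ≠ 1 and h ≠ 1 the subgroups ⟨g⟩ and ⟨h⟩ share a non-identity element (this holds exactly when G is a nice group). If P and Q are finite free G-posets with xind P = 1 and xind Q = 1, then xind (P × Q) = 1. -/

import Mathlib

/-- `f : P → G × {0,…,n}` is a `G`-map to the `G`-poset `Q_n G`, whose order is
`(g,i) ≤ (h,j)` iff `(g,i) = (h,j)` or `i < j`, and whose action is `g • (h,i) = (g h, i)`. -/
def IsGMapToQ (G : Type*) [Group G] {P : Type*} [PartialOrder P] [MulAction G P]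
    (n : ℕ) (f : P → G × Fin (n + 1)) : Prop :=
  (∀ p q : P, p ≤ q → f p = f q ∨ (f p).2 < (f q).2) ∧
  ∀ (g : G) (p : P), f (g • p) = (g * (f p).1, (f p).2)

section Aux

variable {G : Type*} [Group G] {P : Type*} [PartialOrder P] [MulAction G P]

/-- comparability-connectedness -/
def Cmp' (p q : P) : Prop := Relation.ReflTransGen (fun a b => a ≤ b ∨ b ≤ a) p q

lemma Cmp'.symm' {p q : P} (h : Cmp' p q) : Cmp' q p :=
  (@Relation.ReflTransGen.stdSymm _ _ ⟨fun _ _ h => h.symm⟩).symm _ _ h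

lemma Cmp'.smul (hmono : ∀ (g : G) (p q : P), p ≤ q → g • p ≤ g • q)
    (g : G) {p q : P} (h : Cmp' p q) : Cmp' (g • p) (g • q) := by
  induction h with
  | refl => exact .refl
  | tail _ h2 ih => exact ih.tail (h2.imp (hmono g _ _) (hmono g _ _))

lemma Cmp'.pow (hmono : ∀ (g : G) (p q : P), p ≤ q → g • p ≤ g • q)
    {g : G} {p : P} (h : Cmp' p (g • p)) (n : ℕ) : Cmp' p (g ^ n • p) := by
  induction n with
  | zero =>
    rw [pow_zero, one_smul]
    exact Relation.ReflTransGen.refl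
  | succ n ih =>
    have h2 : Cmp' (g ^ n • p) (g ^ n • (g • p)) := h.smul hmono (g ^ n)
    rw [smul_smul, ← pow_succ] at h2
    exact ih.trans h2

lemma cmp'_of_le {p q : P} (h : p ≤ q) : Cmp' p q := Relation.ReflTransGen.single (Or.inl h)

lemma exists_phi (hmono : ∀ (g : G) (p q : P), p ≤ q → g • p ≤ g • q)
    (htriv : ∀ (g : G) (p : P), Cmp' p (g • p) → g = 1) :
    ∃ φ : P → G, (∀ p q : P, p ≤ q → φ p = φ q) ∧
      ∀ (g : G) (p : P), φ (g • p) = g * φ p := by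
  classical
  let s : Setoid P :=
    ⟨fun p q => ∃ g : G, Cmp' p (g • q), by
      constructor
      · intro p; exact ⟨1, by rw [one_smul]; exact Relation.ReflTransGen.refl⟩
      · rintro p q ⟨g, h⟩
        refine ⟨g⁻¹, ?_⟩
        have := h.smul hmono g⁻¹
        rw [inv_smul_smul] at this
        exact this.symm'
      · rintro p q r ⟨g, h1⟩ ⟨g', h2⟩
        have := h2.smul hmono g
        rw [smul_smul] at this
        exact ⟨g * g', h1.trans this⟩⟩
  -- uniqueness of the translation element towards a given point
  have huniq : ∀ (p r : P) (g₁ g₂ : G), Cmp' p (g₁ • r) → Cmp' p (g₂ • r) → g₁ = g₂ := by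
    intro p r g₁ g₂ h1 h2
    have h3 : Cmp' (g₁ • r) (g₂ • r) := h1.symm'.trans h2
    have h4 := h3.smul hmono g₁⁻¹
    rw [inv_smul_smul, smul_smul] at h4
    have := htriv _ _ h4
    have : g₁⁻¹ * g₂ = 1 := this
    exact (inv_mul_eq_one.mp this)
  have hspec : ∀ p : P, ∃ g : G, Cmp' p (g • (Quotient.mk s p).out) := by
    intro p
    exact Setoid.symm (Quotient.mk_out p)
  set φ : P → G := fun p => Classical.choose (hspec p) with hφ
  have hφspec : ∀ p : P, Cmp' p (φ p • (Quotient.mk s p).out) :=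
    fun p => Classical.choose_spec (hspec p)
  refine ⟨φ, ?_, ?_⟩
  · intro p q hle
    have hmk : Quotient.mk s p = Quotient.mk s q :=
      Quotient.sound ⟨1, by rw [one_smul]; exact cmp'_of_le hle⟩
    have h1 := hφspec p
    have h2 := hφspec q
    rw [hmk] at h1
    exact huniq p _ _ _ h1 ((cmp'_of_le hle).trans h2)
  · intro g p
    have hmk : Quotient.mk s (g • p) = Quotient.mk s p :=
      Quotient.sound ⟨g, Relation.ReflTransGen.refl⟩
    have h1 := hφspec (g • p)
    rw [hmk] at h1
    have h2 := (hφspec p).smul hmono g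
    rw [smul_smul] at h2
    exact huniq (g • p) _ _ _ h1 h2

end Aux

lemma cmp'_prod_left {P Q : Type*} [PartialOrder P] [PartialOrder Q] {p p' : P} (q : Q)
    (h : Cmp' p p') : Cmp' ((p, q) : P × Q) (p', q) := by
  induction h with
  | refl => exact Relation.ReflTransGen.refl
  | tail _ h2 ih =>
    exact ih.tail (h2.imp (fun hle => ⟨hle, le_refl q⟩) (fun hle => ⟨hle, le_refl q⟩))

lemma cmp'_prod_right {P Q : Type*} [PartialOrder P] [PartialOrder Q] {q q' : Q} (p : P)
    (h : Cmp' q q') : Cmp' ((p, q) : P × Q) (p, q') := by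
  induction h with
  | refl => exact Relation.ReflTransGen.refl
  | tail _ h2 ih =>
    exact ih.tail (h2.imp (fun hle => ⟨le_refl p, hle⟩) (fun hle => ⟨le_refl p, hle⟩))

lemma exists_pow_nat {G : Type*} [Group G] [Finite G] {g k : G}
    (h : k ∈ Subgroup.zpowers g) : ∃ n : ℕ, g ^ n = k := by
  rw [← mem_powers_iff_mem_zpowers] at h
  obtain ⟨n, hn⟩ := h
  exact ⟨n, hn⟩

/-- If in `G` any two nontrivial cyclic subgroups intersect nontrivially (i.e. `G` is a "nice"
group), and `P, Q` are finite free `G`-posets with `xind P = xind Q = 1`, then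
`xind (P × Q) = 1` (componentwise order, diagonal action on the product). -/
theorem stmt6 {G : Type*} [Group G] [Finite G]
    (hnice : ∀ g h : G, g ≠ 1 → h ≠ 1 →
      ∃ k : G, k ≠ 1 ∧ k ∈ Subgroup.zpowers g ∧ k ∈ Subgroup.zpowers h)
    {P Q : Type*} [PartialOrder P] [PartialOrder Q] [Finite P] [Finite Q]
    [MulAction G P] [MulAction G Q]
    (hmonoP : ∀ (g : G) (p q : P), p ≤ q → g • p ≤ g • q)
    (hmonoQ : ∀ (g : G) (p q : Q), p ≤ q → g • p ≤ g • q)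
    (hfreeP : ∀ (g : G) (p : P), g • p = p → g = 1)
    (hfreeQ : ∀ (g : G) (q : Q), g • q = q → g = 1)
    (hP1 : ∃ f : P → G × Fin 2, IsGMapToQ G 1 f)
    (hP0 : ¬ ∃ f : P → G × Fin 1, IsGMapToQ G 0 f)
    (hQ1 : ∃ f : Q → G × Fin 2, IsGMapToQ G 1 f)
    (hQ0 : ¬ ∃ f : Q → G × Fin 1, IsGMapToQ G 0 f) :
    (∃ f : P × Q → G × Fin 2, IsGMapToQ G 1 f) ∧
    ¬ ∃ f : P × Q → G × Fin 1, IsGMapToQ G 0 f := by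
  constructor
  · -- project to `P` and use the map for `P`
    obtain ⟨f, hf1, hf2⟩ := hP1
    refine ⟨fun x => f x.1, fun x y hxy => hf1 x.1 y.1 hxy.1, fun g x => hf2 g x.1⟩
  · rintro ⟨f, hf1, hf2⟩
    -- the first component of `f` is equivariant and constant on comparable pairs
    set ψ : P × Q → G := fun x => (f x).1 with hψ
    have hψle : ∀ x y : P × Q, x ≤ y → ψ x = ψ y := by
      intro x y hxy
      rcases hf1 x y hxy with h | h
      · exact congrArg Prod.fst h
      · exact absurd (Subsingleton.elim (f x).2 (f y).2 ▸ h) (lt_irrefl _)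
    have hψcmp : ∀ x y : P × Q, Cmp' x y → ψ x = ψ y := by
      intro x y h
      induction h with
      | refl => rfl
      | tail _ h2 ih =>
        rcases h2 with h2 | h2
        · exact ih.trans (hψle _ _ h2)
        · exact ih.trans (hψle _ _ h2).symm
    have hψsmul : ∀ (g : G) (x : P × Q), ψ (g • x) = g * ψ x := by
      intro g x
      rw [hψ]
      simp only [hf2 g x]
    -- extract nontrivial holonomy in `P`
    have hPw : ∃ (g : G) (p : P), g ≠ 1 ∧ Cmp' p (g • p) := by
      by_contra hc
      push_neg at hc
      obtain ⟨φ, hφ1, hφ2⟩ := exists_phi hmonoP (by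
        intro g p hgp
        by_contra hg1
        exact (hc g p hg1) hgp)
      exact hP0 ⟨fun p => (φ p, 0), fun p q hpq => Or.inl (by
        simp only [hφ1 p q hpq]), fun g p => by simp only [hφ2 g p]⟩
    have hQw : ∃ (h : G) (q : Q), h ≠ 1 ∧ Cmp' q (h • q) := by
      by_contra hc
      push_neg at hc
      obtain ⟨φ, hφ1, hφ2⟩ := exists_phi hmonoQ (by
        intro g q hgq
        by_contra hg1
        exact (hc g q hg1) hgq)
      exact hQ0 ⟨fun q => (φ q, 0), fun p q hpq => Or.inl (by
        simp only [hφ1 p q hpq]), fun g q => by simp only [hφ2 g q]⟩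
    obtain ⟨g, p, hg1, hgp⟩ := hPw
    obtain ⟨h, q, hh1, hhq⟩ := hQw
    obtain ⟨k, hk1, hkg, hkh⟩ := hnice g h hg1 hh1
    obtain ⟨a, ha⟩ := exists_pow_nat hkg
    obtain ⟨b, hb⟩ := exists_pow_nat hkh
    have hpk : Cmp' p (k • p) := ha ▸ hgp.pow hmonoP a
    have hqk : Cmp' q (k • q) := hb ▸ hhq.pow hmonoQ b
    -- lift chains to the product
    have hlift1 : Cmp' ((p, q) : P × Q) (k • p, q) := cmp'_prod_left q hpk
    have hlift2 : Cmp' ((k • p, q) : P × Q) (k • p, k • q) := cmp'_prod_right (k • p) hqk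
    have hchain : Cmp' ((p, q) : P × Q) (k • (p, q)) := by
      have : k • ((p, q) : P × Q) = (k • p, k • q) := rfl
      rw [this]
      exact hlift1.trans hlift2
    have := hψcmp _ _ hchain
    rw [hψsmul k (p, q)] at this
    exact hk1 (mul_eq_right.mp this.symm)
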